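/- Let F ∈ ℂ[y,z,w], viewed inside ℂ[x,y,z,w], and let λ ∈ ℂ be a primitive 3rd root of unity. The ℂ-algebra automorphism of ℂ[x,y,z,w] sending x ↦ λx and fixing y, z, w preserves the ideal (x³ − F) and hence descends to an automorphism σ of T := ℂ[x,y,z,w]/(x³ − F). Then the composite map ℂ[y,z,w] → T takes values in the invariant subalgebra T^σ and induces a ℂ-algebra isomorphism ℂ[y,z,w] ≅ T^σ. -/

import Mathlib

/-!
STATEMENT 5: Let F ∈ ℂ[y,z,w] ⊂ ℂ[x,y,z,w] and λ a primitive 3rd root of unity.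
The automorphism of ℂ[x,y,z,w] sending x ↦ λx and fixing y,z,w preserves the
ideal (x³ − F), hence descends to an automorphism σ of
T = ℂ[x,y,z,w]/(x³ − F). The composite ℂ[y,z,w] → T takes values in T^σ and
induces a ℂ-algebra isomorphism ℂ[y,z,w] ≅ T^σ.
-/

open MvPolynomial

noncomputable section

/-- `F(y,z,w)` viewed in `ℂ[x,y,z,w]` (variables `x,y,z,w` indexed `0,1,2,3`). -/
def Fyzw (F₀ : MvPolynomial (Fin 3) ℂ) : MvPolynomial (Fin 4) ℂ :=
  rename ![1, 2, 3] F₀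

/-- The principal ideal `(x³ − F)`. -/
def cubicIdeal (F₀ : MvPolynomial (Fin 3) ℂ) : Ideal (MvPolynomial (Fin 4) ℂ) :=
  Ideal.span {X 0 ^ 3 - Fyzw F₀}

/-- The ℂ-algebra endomorphism of `ℂ[x,y,z,w]` sending `x ↦ λx` and fixing `y,z,w`. -/
def scaleX (lam : ℂ) : MvPolynomial (Fin 4) ℂ →ₐ[ℂ] MvPolynomial (Fin 4) ℂ :=
  aeval (fun i : Fin 4 => if i = 0 then C lam * X 0 else X i)

/-- The quotient ring `T = ℂ[x,y,z,w]/(x³ − F)`. -/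
abbrev Tc (F₀ : MvPolynomial (Fin 3) ℂ) : Type :=
  MvPolynomial (Fin 4) ℂ ⧸ cubicIdeal F₀

/-- The projection to the quotient. -/
def mkTc (F₀ : MvPolynomial (Fin 3) ℂ) : MvPolynomial (Fin 4) ℂ →+* Tc F₀ :=
  Ideal.Quotient.mk (cubicIdeal F₀)

/-- The composite ℂ-algebra map `ℂ[y,z,w] → ℂ[x,y,z,w] → T`. -/
def ψc (F₀ : MvPolynomial (Fin 3) ℂ) : MvPolynomial (Fin 3) ℂ →ₐ[ℂ] Tc F₀ :=
  aeval ![mkTc F₀ (X 1), mkTc F₀ (X 2), mkTc F₀ (X 3)]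

-- auxiliary lemmas
abbrev Ryzw : Type := MvPolynomial (Fin 3) ℂ

lemma vec_eq_succ : ![(1 : Fin 4), 2, 3] = Fin.succ := by
  funext i; fin_cases i <;> rfl

lemma Fyzw_eq (F₀ : Ryzw) : Fyzw F₀ = rename Fin.succ F₀ := by
  rw [Fyzw, vec_eq_succ]

lemma scaleX_rename (lam : ℂ) (p : Ryzw) :
    scaleX lam (rename Fin.succ p) = rename Fin.succ p := by
  have h : (scaleX lam).comp (MvPolynomial.rename Fin.succ : Ryzw →ₐ[ℂ] _)
      = (MvPolynomial.rename Fin.succ : Ryzw →ₐ[ℂ] _) := by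
    apply MvPolynomial.algHom_ext
    intro i
    simp [scaleX, Fin.succ_ne_zero]
  exact AlgHom.congr_fun h p

lemma finSuccEquiv_rename_succ (p : Ryzw) :
    finSuccEquiv ℂ 3 (rename Fin.succ p) = Polynomial.C p := by
  have h : (finSuccEquiv ℂ 3).toAlgHom.comp (MvPolynomial.rename Fin.succ : Ryzw →ₐ[ℂ] _)
      = (IsScalarTower.toAlgHom ℂ Ryzw (Polynomial Ryzw)) := by
    apply MvPolynomial.algHom_ext
    intro i
    simp [finSuccEquiv_X_succ]
  exact AlgHom.congr_fun h p

/-- The cubic over `Ryzw`. -/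
def fcub (F₀ : Ryzw) : Polynomial Ryzw := Polynomial.X ^ 3 - Polynomial.C F₀

lemma fcub_monic (F₀ : Ryzw) : (fcub F₀).Monic := by
  apply Polynomial.monic_X_pow_sub (n := 3)
  exact lt_of_le_of_lt Polynomial.degree_C_le (by norm_num)

lemma fcub_natDegree (F₀ : Ryzw) : (fcub F₀).natDegree = 3 :=
  Polynomial.natDegree_X_pow_sub_C

lemma e_gen (F₀ : Ryzw) :
    finSuccEquiv ℂ 3 (X 0 ^ 3 - Fyzw F₀) = fcub F₀ := by
  rw [map_sub, map_pow, finSuccEquiv_X_zero, Fyzw_eq, finSuccEquiv_rename_succ, fcub]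

lemma ideal_map_e (F₀ : Ryzw) :
    Ideal.span {fcub F₀} =
      Ideal.map ((finSuccEquiv ℂ 3 : MvPolynomial (Fin 4) ℂ ≃ₐ[ℂ] Polynomial Ryzw) :
        MvPolynomial (Fin 4) ℂ →+* Polynomial Ryzw) (cubicIdeal F₀) := by
  rw [cubicIdeal, Ideal.map_span, Set.image_singleton]
  congr 1
  simp [e_gen F₀]

/-- The transported equivalence to `AdjoinRoot (fcub F₀)`. -/
def Φc (F₀ : Ryzw) : Tc F₀ ≃ₐ[ℂ] AdjoinRoot (fcub F₀) :=
  Ideal.quotientEquivAlg (cubicIdeal F₀) (Ideal.span {fcub F₀}) (finSuccEquiv ℂ 3)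
    (ideal_map_e F₀)

lemma Φc_mk (F₀ : Ryzw) (p : MvPolynomial (Fin 4) ℂ) :
    Φc F₀ (mkTc F₀ p) = AdjoinRoot.mk (fcub F₀) (finSuccEquiv ℂ 3 p) := rfl

lemma psi_eq_rename (F₀ : Ryzw) (q : Ryzw) :
    ψc F₀ q = mkTc F₀ (rename Fin.succ q) := by
  have h : ψc F₀ = (Ideal.Quotient.mkₐ ℂ (cubicIdeal F₀)).comp
      (MvPolynomial.rename Fin.succ : Ryzw →ₐ[ℂ] _) := by
    apply MvPolynomial.algHom_ext
    intro i
    fin_cases i <;> simp [ψc, mkTc] <;> rfl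
  exact AlgHom.congr_fun h q

lemma Φ_psi (F₀ : Ryzw) (q : Ryzw) :
    Φc F₀ (ψc F₀ q) = algebraMap Ryzw (AdjoinRoot (fcub F₀)) q := by
  rw [psi_eq_rename, Φc_mk, finSuccEquiv_rename_succ, AdjoinRoot.algebraMap_eq]
  rfl

/-- power basis -/
def Bc (F₀ : Ryzw) : PowerBasis Ryzw (AdjoinRoot (fcub F₀)) :=
  AdjoinRoot.powerBasis' (fcub_monic F₀)

lemma algebraMap_adjoinRoot_injective (F₀ : Ryzw) :
    Function.Injective (algebraMap Ryzw (AdjoinRoot (fcub F₀))) := by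
  intro a b h
  have hdim : 0 < (Bc F₀).dim := by
    rw [Bc, AdjoinRoot.powerBasis'_dim, fcub_natDegree]; norm_num
  let i0 : Fin (Bc F₀).dim := ⟨0, hdim⟩
  have h1 : (Bc F₀).basis i0 = 1 := by
    rw [(Bc F₀).basis_eq_pow]; simp [i0]
  have ha : algebraMap Ryzw (AdjoinRoot (fcub F₀)) a = a • (Bc F₀).basis i0 := by
    rw [h1, Algebra.algebraMap_eq_smul_one]
  have hb : algebraMap Ryzw (AdjoinRoot (fcub F₀)) b = b • (Bc F₀).basis i0 := by
    rw [h1, Algebra.algebraMap_eq_smul_one]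
  have h2 := congrArg (fun x => ((Bc F₀).basis.repr x) i0) (ha ▸ hb ▸ h)
  simp only [map_smul, (Bc F₀).basis.repr_self, Finsupp.smul_single,
    Finsupp.single_eq_same, smul_eq_mul, mul_one] at h2
  exact h2

lemma invariant_mem (F₀ : Ryzw) (lam : ℂ) (hlam : IsPrimitiveRoot lam 3)
    (τ' : AdjoinRoot (fcub F₀) ≃ₐ[ℂ] AdjoinRoot (fcub F₀))
    (hC : ∀ a : Ryzw, τ' (algebraMap Ryzw _ a) = algebraMap Ryzw _ a)
    (hroot : τ' (AdjoinRoot.root (fcub F₀)) = lam • AdjoinRoot.root (fcub F₀))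
    (x : AdjoinRoot (fcub F₀)) (hx : τ' x = x) :
    ∃ a : Ryzw, algebraMap Ryzw (AdjoinRoot (fcub F₀)) a = x := by
  set B := Bc F₀ with hB
  have hsm : ∀ (a : Ryzw) (v : AdjoinRoot (fcub F₀)), τ' (a • v) = a • τ' v := by
    intro a v
    rw [Algebra.smul_def, map_mul, hC, ← Algebra.smul_def]
  set c : Fin B.dim → Ryzw := fun i => B.basis.repr x i with hc
  set l : Fin B.dim → Ryzw := fun i => algebraMap ℂ Ryzw (lam ^ (i : ℕ)) with hl
  have hgen : B.gen = AdjoinRoot.root (fcub F₀) := by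
    rw [hB, Bc, AdjoinRoot.powerBasis'_gen]
  have hbasis : ∀ i : Fin B.dim, τ' (B.basis i) = l i • B.basis i := by
    intro i
    rw [B.basis_eq_pow, hgen, map_pow, hroot, smul_pow, ← hgen, ← B.basis_eq_pow, hl,
      algebraMap_smul]
  have hsum : x = ∑ i, c i • B.basis i := (B.basis.sum_repr x).symm
  have hτx : τ' x = ∑ i, (c i * l i) • B.basis i := by
    rw [hsum, map_sum]
    refine Finset.sum_congr rfl fun i _ => ?_
    rw [hsm, hbasis, smul_smul]
  have hcoeff : ∀ i, c i * l i = c i := by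
    intro i
    have h1 := congrArg (fun y => B.basis.repr y i) (hτx.symm.trans hx)
    rw [hsum] at h1
    rw [B.basis.repr_sum_self, B.basis.repr_sum_self] at h1
    exact h1
  have hdim3 : B.dim = 3 := by rw [hB, Bc, AdjoinRoot.powerBasis'_dim, fcub_natDegree]
  have hdim : 0 < B.dim := by omega
  let i0 : Fin B.dim := ⟨0, hdim⟩
  have hzero : ∀ i : Fin B.dim, i ≠ i0 → c i = 0 := by
    intro i hi
    have hipos : 0 < (i : ℕ) := by
      rcases Nat.eq_zero_or_pos (i : ℕ) with h | h
      · exact absurd (Fin.ext h) hi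
      · exact h
    have hne : lam ^ (i : ℕ) ≠ 1 :=
      hlam.pow_ne_one_of_pos_of_lt hipos.ne' (by omega)
    have hlne : l i ≠ 1 := by
      rw [hl]
      intro h
      exact hne (by
        have : (algebraMap ℂ Ryzw) (lam ^ (i:ℕ)) = algebraMap ℂ Ryzw 1 := by
          simpa using h
        exact (MvPolynomial.C_injective _ ℂ) this)
    have := hcoeff i
    have h0 : c i * (l i - 1) = 0 := by ring_nf; rw [mul_comm] at this ⊢; linear_combination this
    rcases mul_eq_zero.mp h0 with h | h
    · exact h
    · exact absurd (by linear_combination h) hlne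
  refine ⟨c i0, ?_⟩
  rw [hsum, Finset.sum_eq_single i0]
  · have h1 : B.basis i0 = 1 := by rw [B.basis_eq_pow]; simp [i0]
    rw [h1, Algebra.algebraMap_eq_smul_one]
  · intro i _ hi
    rw [hzero i hi, zero_smul]
  · intro h; exact absurd (Finset.mem_univ i0) h

lemma scaleX_gen (F₀ : Ryzw) (lam : ℂ) (h3 : lam ^ 3 = 1) :
    scaleX lam (X 0 ^ 3 - Fyzw F₀) = X 0 ^ 3 - Fyzw F₀ := by
  rw [map_sub, map_pow, Fyzw_eq, scaleX_rename]
  have hx : scaleX lam (X 0) = C lam * X 0 := by simp [scaleX]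
  rw [hx, mul_pow, ← C_pow, h3, C_1, one_mul]

lemma part1 (F₀ : Ryzw) (lam : ℂ) (h3 : lam ^ 3 = 1) :
    Ideal.map (scaleX lam) (cubicIdeal F₀) = cubicIdeal F₀ := by
  rw [cubicIdeal, Ideal.map_span, Set.image_singleton, scaleX_gen F₀ lam h3]

lemma scaleX_comp (a b : ℂ) (h : b * a = 1) :
    (scaleX a).comp (scaleX b) = AlgHom.id ℂ (MvPolynomial (Fin 4) ℂ) := by
  apply MvPolynomial.algHom_ext
  intro i
  by_cases hi : i = 0
  · subst hi
    simp only [AlgHom.comp_apply, AlgHom.id_apply]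
    have hb : scaleX b (X 0) = C b * X 0 := by simp [scaleX]
    have ha : scaleX a (X 0) = C a * X 0 := by simp [scaleX]
    have hc : scaleX a (C b) = C b := by simp [scaleX]
    rw [hb, map_mul, hc, ha, ← mul_assoc, ← C_mul, h, C_1, one_mul]
  · simp [scaleX, hi]

/-- the algebra equivalence scaling `x` by `lam`. -/
def scaleXEquiv (lam : ℂ) (h3 : lam ^ 3 = 1) :
    MvPolynomial (Fin 4) ℂ ≃ₐ[ℂ] MvPolynomial (Fin 4) ℂ :=
  AlgEquiv.ofAlgHom (scaleX lam) (scaleX (lam ^ 2))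
    (scaleX_comp lam (lam ^ 2) (by rw [← pow_succ]; exact h3))
    (scaleX_comp (lam ^ 2) lam (by rw [← pow_succ']; exact h3))

lemma part1' (F₀ : Ryzw) (lam : ℂ) (h3 : lam ^ 3 = 1) :
    cubicIdeal F₀ =
      Ideal.map ((scaleXEquiv lam h3 : MvPolynomial (Fin 4) ℂ ≃ₐ[ℂ] MvPolynomial (Fin 4) ℂ) :
        MvPolynomial (Fin 4) ℂ →+* MvPolynomial (Fin 4) ℂ) (cubicIdeal F₀) := by
  conv_lhs => rw [cubicIdeal]
  rw [cubicIdeal, Ideal.map_span, Set.image_singleton]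
  congr 1
  show _ = {scaleX lam (X 0 ^ 3 - Fyzw F₀)}
  rw [scaleX_gen F₀ lam h3]

/-- σ -/
def sigmaT (F₀ : Ryzw) (lam : ℂ) (h3 : lam ^ 3 = 1) : Tc F₀ ≃ₐ[ℂ] Tc F₀ :=
  Ideal.quotientEquivAlg (cubicIdeal F₀) (cubicIdeal F₀) (scaleXEquiv lam h3) (part1' F₀ lam h3)

lemma sigmaT_mk (F₀ : Ryzw) (lam : ℂ) (h3 : lam ^ 3 = 1) (r : MvPolynomial (Fin 4) ℂ) :
    sigmaT F₀ lam h3 (mkTc F₀ r) = mkTc F₀ (scaleX lam r) := rfl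

theorem quotient_of_cubic_surface_by_order_three
    (F₀ : MvPolynomial (Fin 3) ℂ) (lam : ℂ) (hlam : IsPrimitiveRoot lam 3) :
    -- the automorphism x ↦ λx preserves the ideal (x³ − F) ...
    Ideal.map (scaleX lam) (cubicIdeal F₀) = cubicIdeal F₀ ∧
    -- ... hence descends to an automorphism σ of T ...
    ∃ σ : Tc F₀ ≃ₐ[ℂ] Tc F₀,
      (∀ r : MvPolynomial (Fin 4) ℂ, σ (mkTc F₀ r) = mkTc F₀ (scaleX lam r)) ∧
      ∀ τ : Tc F₀ ≃ₐ[ℂ] Tc F₀,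
        (∀ r : MvPolynomial (Fin 4) ℂ, τ (mkTc F₀ r) = mkTc F₀ (scaleX lam r)) →
        -- the composite ℂ[y,z,w] → T takes values in T^σ and induces an
        -- isomorphism ℂ[y,z,w] ≅ T^σ:
        (ψc F₀).range =
            AlgHom.equalizer (τ : Tc F₀ →ₐ[ℂ] Tc F₀) (AlgHom.id ℂ (Tc F₀)) ∧
          Function.Injective (ψc F₀) := by
  have h3 : lam ^ 3 = 1 := hlam.pow_eq_one
  refine ⟨part1 F₀ lam h3, sigmaT F₀ lam h3, sigmaT_mk F₀ lam h3, ?_⟩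
  intro τ hτ
  set Φ := Φc F₀ with hΦ
  -- τ fixes the image of ψc
  have hfix : ∀ q : Ryzw, τ (ψc F₀ q) = ψc F₀ q := by
    intro q
    rw [psi_eq_rename, hτ, scaleX_rename]
  -- transported automorphism
  set τ' : AdjoinRoot (fcub F₀) ≃ₐ[ℂ] AdjoinRoot (fcub F₀) :=
    Φ.symm.trans (τ.trans Φ) with hτ'
  have hτ'app : ∀ y, τ' y = Φ (τ (Φ.symm y)) := fun y => rfl
  have hC : ∀ a : Ryzw, τ' (algebraMap Ryzw (AdjoinRoot (fcub F₀)) a)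
      = algebraMap Ryzw (AdjoinRoot (fcub F₀)) a := by
    intro a
    rw [← Φ_psi, hτ'app, AlgEquiv.symm_apply_apply, hfix]
  have hroot : τ' (AdjoinRoot.root (fcub F₀)) = lam • AdjoinRoot.root (fcub F₀) := by
    have h0 : Φ (mkTc F₀ (X 0)) = AdjoinRoot.root (fcub F₀) := by
      rw [hΦ, Φc_mk, finSuccEquiv_X_zero]; rfl
    have hsx : scaleX lam (X 0) = C lam * X 0 := by simp [scaleX]
    have hsmul : mkTc F₀ (C lam * X 0) = lam • mkTc F₀ (X 0) := by
      rw [← smul_eq_C_mul]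
      exact map_smul (Ideal.Quotient.mkₐ ℂ (cubicIdeal F₀)) lam (X 0)
    rw [← h0, hτ'app, AlgEquiv.symm_apply_apply, hτ, hsx, hsmul, map_smul]
  constructor
  · apply SetLike.ext
    intro t
    rw [AlgHom.mem_equalizer]
    constructor
    · rintro ⟨q, rfl⟩
      rw [AlgEquiv.coe_toAlgHom, AlgHom.id_apply]
      exact hfix q
    · intro ht
      rw [AlgEquiv.coe_toAlgHom, AlgHom.id_apply] at ht
      have hfx : τ' (Φ t) = Φ t := by
        rw [hτ'app, AlgEquiv.symm_apply_apply, ht]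
      obtain ⟨a, ha⟩ := invariant_mem F₀ lam hlam τ' hC hroot (Φ t) hfx
      refine ⟨a, ?_⟩
      have := congrArg Φ.symm (ha.symm.trans (Φ_psi F₀ a).symm)
      rw [AlgEquiv.symm_apply_apply, AlgEquiv.symm_apply_apply] at this
      exact this.symm
  · intro q1 q2 h
    apply algebraMap_adjoinRoot_injective F₀
    rw [← Φ_psi, ← Φ_psi, h]
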